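/- Let G, v, (C₁, C₂), M, G' and k be as in the neighborhood-clique reduction: v is a vertex of G, (C₁, C₂) is a partition of N(v) with |C₁| ≥ |C₂| ≥ 1, both C₁ and C₂ are cliques in G, M is the set of non-adjacent pairs {c₁, c₂} with c₁ ∈ C₁ and c₂ ∈ C₂, every vertex of C₁ lies in precisely one pair of M, and G' is obtained from G by deleting v and C₂ and, for every {c₁, c₂} ∈ M, adding all edges between c₁ and N_G(c₂) \ ({v} ∪ C₂ ∪ {c₁}). Then G contains a vertex cover X of size exactly k with |C₁ \ X| = 1 and |C₂ \ X| = 1 if and only if G' contains a vertex cover X' of size exactly k − |C₂| with |C₁ \ X'| = 1. -/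
import Mathlib


/-- `X` is a vertex cover of `G`: every edge has at least one endpoint in `X`. -/
def IsVC {V : Type*} (G : SimpleGraph V) (X : Set V) : Prop :=
  ∀ ⦃u w : V⦄, G.Adj u w → u ∈ X ∨ w ∈ X

/-- The graph `G'` obtained from `G` by deleting `v` and all of `C₂` and, for every
non-adjacent pair `(c₁, c₂)` with `c₁ ∈ C₁` and `c₂ ∈ C₂` (i.e., every pair of `M`),
adding all edges between `c₁` and the vertices of `N_G(c₂) \ ({v} ∪ C₂ ∪ {c₁})`. -/
def ReduceCliques {V : Type*} (G : SimpleGraph V) (v : V) (C₁ C₂ : Finset V) :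
    SimpleGraph {w : V // w ≠ v ∧ w ∉ C₂} :=
  SimpleGraph.fromRel (fun w w' =>
    G.Adj w.1 w'.1 ∨
      (w.1 ∈ C₁ ∧ ∃ c₂ ∈ C₂, ¬ G.Adj w.1 c₂ ∧ G.Adj c₂ w'.1))

theorem stmt_13 {V : Type*} [Fintype V] [DecidableEq V] (G : SimpleGraph V) (k : ℕ)
    (v : V) (C₁ C₂ : Finset V)
    (hpart : (↑C₁ ∪ ↑C₂ : Set V) = G.neighborSet v) (hdisj : Disjoint C₁ C₂)
    (hcard : C₂.card ≤ C₁.card) (hC₂ne : 1 ≤ C₂.card) (hk : C₂.card ≤ k)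
    (hclique₁ : G.IsClique ↑C₁) (hclique₂ : G.IsClique ↑C₂)
    (hM : ∀ c₁ ∈ C₁, ∃! c₂, c₂ ∈ C₂ ∧ ¬ G.Adj c₁ c₂) :
    (∃ X : Set V, IsVC G X ∧ X.ncard = k ∧
      ((↑C₁ : Set V) \ X).ncard = 1 ∧ ((↑C₂ : Set V) \ X).ncard = 1) ↔
    (∃ X' : Set {w : V // w ≠ v ∧ w ∉ C₂}, IsVC (ReduceCliques G v C₁ C₂) X' ∧
      X'.ncard = k - C₂.card ∧ ((↑C₁ : Set V) \ (Subtype.val '' X')).ncard = 1) := by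
  classical
  have hvmem : ∀ c : V, c ∈ C₁ ∨ c ∈ C₂ → G.Adj v c := by
    intro c hc
    have hmem : c ∈ (↑C₁ ∪ ↑C₂ : Set V) := by
      rcases hc with h | h
      · exact Or.inl (Finset.mem_coe.mpr h)
      · exact Or.inr (Finset.mem_coe.mpr h)
    rw [hpart] at hmem
    exact hmem
  have hv1 : v ∉ C₁ := fun h => G.irrefl (hvmem v (Or.inl h))
  have hv2 : v ∉ C₂ := fun h => G.irrefl (hvmem v (Or.inr h))
  have hd12 : ∀ x ∈ C₁, x ∉ C₂ := fun x hx => Finset.disjoint_left.mp hdisj hx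
  constructor
  · -- forward
    rintro ⟨X, hVC, hX, h1, h2⟩
    obtain ⟨c₁s, hc1⟩ := Set.ncard_eq_one.mp h1
    obtain ⟨c₂s, hc2⟩ := Set.ncard_eq_one.mp h2
    have hc₁m : c₁s ∈ (↑C₁ : Set V) \ X := hc1 ▸ Set.mem_singleton c₁s
    have hc₂m : c₂s ∈ (↑C₂ : Set V) \ X := hc2 ▸ Set.mem_singleton c₂s
    obtain ⟨hc₁C, hc₁X⟩ := hc₁m
    obtain ⟨hc₂C, hc₂X⟩ := hc₂m
    have hC1sub : ∀ x ∈ C₁, x ≠ c₁s → x ∈ X := by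
      intro x hx hne
      by_contra hxX
      have hx' : x ∈ (↑C₁ : Set V) \ X := ⟨Finset.mem_coe.mpr hx, hxX⟩
      rw [hc1] at hx'
      exact hne hx'
    have hC2sub : ∀ x ∈ C₂, x ≠ c₂s → x ∈ X := by
      intro x hx hne
      by_contra hxX
      have hx' : x ∈ (↑C₂ : Set V) \ X := ⟨Finset.mem_coe.mpr hx, hxX⟩
      rw [hc2] at hx'
      exact hne hx'
    have hvX : v ∈ X := (hVC (hvmem c₂s (Or.inr hc₂C))).resolve_right hc₂X
    have hna : ¬ G.Adj c₁s c₂s := fun h => (hVC h).elim hc₁X hc₂X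
    refine ⟨{w | w.1 ∈ X}, ?_, ?_, ?_⟩
    · -- vertex cover of G'
      have key : ∀ a b : {w : V // w ≠ v ∧ w ∉ C₂},
          (G.Adj a.1 b.1 ∨ (a.1 ∈ C₁ ∧ ∃ c₂ ∈ C₂, ¬ G.Adj a.1 c₂ ∧ G.Adj c₂ b.1)) →
          a.1 ∈ X ∨ b.1 ∈ X := by
        rintro a b (h | ⟨haC, c₂, hc₂C', hnadj, hadj⟩)
        · exact hVC h
        · by_cases haX : a.1 ∈ X
          · exact Or.inl haX
          · have ha1 : a.1 = c₁s := by
              by_contra hne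
              exact haX (hC1sub _ haC hne)
            subst ha1
            obtain ⟨y, _, huniq⟩ := hM a.1 haC
            have h1' : c₂ = y := huniq c₂ ⟨hc₂C', hnadj⟩
            have h2' : c₂s = y := huniq c₂s ⟨hc₂C, hna⟩
            rw [h1', ← h2'] at hadj
            exact Or.inr ((hVC hadj).resolve_left hc₂X)
      intro a b hab
      rw [ReduceCliques, SimpleGraph.fromRel_adj] at hab
      rcases hab.2 with h | h
      · exact key a b h
      · exact (key b a h).symm
    · -- cardinality
      have himg : Subtype.val '' {w : {w : V // w ≠ v ∧ w ∉ C₂} | w.1 ∈ X}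
          = X \ ({v} ∪ ↑C₂) := by
        ext x
        constructor
        · rintro ⟨⟨y, hy1, hy2⟩, hmem, rfl⟩
          refine ⟨hmem, ?_⟩
          rintro (h | h)
          · exact hy1 h
          · exact hy2 (Finset.mem_coe.mp h)
        · rintro ⟨hx, hx2⟩
          rw [Set.mem_union, not_or] at hx2
          exact ⟨⟨x, fun h => hx2.1 h, fun h => hx2.2 (Finset.mem_coe.mpr h)⟩, hx, rfl⟩
      have hXA : X \ ({v} ∪ ↑C₂) = X \ insert v ((↑C₂ : Set V) \ {c₂s}) := by
        ext x
        constructor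
        · rintro ⟨hx, h2⟩
          refine ⟨hx, ?_⟩
          rintro (rfl | ⟨hxC, -⟩)
          · exact h2 (Or.inl rfl)
          · exact h2 (Or.inr hxC)
        · rintro ⟨hx, h2⟩
          refine ⟨hx, ?_⟩
          rintro (rfl | hxC)
          · exact h2 (Or.inl rfl)
          · by_cases hxc : x = c₂s
            · exact hc₂X (hxc ▸ hx)
            · exact h2 (Or.inr ⟨hxC, hxc⟩)
      have hAsub : insert v ((↑C₂ : Set V) \ {c₂s}) ⊆ X := by
        rintro x (rfl | ⟨hxC, hxne⟩)
        · exact hvX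
        · exact hC2sub x (Finset.mem_coe.mp hxC) hxne
      have hAcard : (insert v ((↑C₂ : Set V) \ {c₂s})).ncard = C₂.card := by
        rw [Set.ncard_insert_of_notMem (by
          rintro ⟨h, -⟩; exact hv2 (Finset.mem_coe.mp h))]
        rw [Set.ncard_diff (Set.singleton_subset_iff.mpr (Finset.mem_coe.mpr hc₂C))]
        rw [Set.ncard_singleton, Set.ncard_coe_finset]
        omega
      rw [show ({w : {w : V // w ≠ v ∧ w ∉ C₂} | w.1 ∈ X}).ncard
            = (Subtype.val '' {w : {w : V // w ≠ v ∧ w ∉ C₂} | w.1 ∈ X}).ncard from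
            (Set.ncard_image_of_injective _ Subtype.val_injective).symm]
      rw [himg, hXA, Set.ncard_diff hAsub, hAcard, hX]
    · -- C₁ part
      have himg : Subtype.val '' {w : {w : V // w ≠ v ∧ w ∉ C₂} | w.1 ∈ X}
          = X \ ({v} ∪ ↑C₂) := by
        ext x
        constructor
        · rintro ⟨⟨y, hy1, hy2⟩, hmem, rfl⟩
          refine ⟨hmem, ?_⟩
          rintro (h | h)
          · exact hy1 h
          · exact hy2 (Finset.mem_coe.mp h)
        · rintro ⟨hx, hx2⟩
          rw [Set.mem_union, not_or] at hx2
          exact ⟨⟨x, fun h => hx2.1 h, fun h => hx2.2 (Finset.mem_coe.mpr h)⟩, hx, rfl⟩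
      rw [himg]
      have : (↑C₁ : Set V) \ (X \ ({v} ∪ ↑C₂)) = (↑C₁ : Set V) \ X := by
        ext x
        constructor
        · rintro ⟨hx, h⟩
          refine ⟨hx, fun hxX => h ⟨hxX, ?_⟩⟩
          rintro (rfl | hC)
          · exact hv1 (Finset.mem_coe.mp hx)
          · exact hd12 x (Finset.mem_coe.mp hx) (Finset.mem_coe.mp hC)
        · rintro ⟨hx, h⟩
          exact ⟨hx, fun hxX => h hxX.1⟩
      rw [this, h1]
  · -- backward
    rintro ⟨X', hVC, hX', h1⟩
    obtain ⟨c₁s, hc1⟩ := Set.ncard_eq_one.mp h1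
    have hc₁m : c₁s ∈ (↑C₁ : Set V) \ (Subtype.val '' X') := hc1 ▸ Set.mem_singleton c₁s
    obtain ⟨hc₁C, hc₁X'⟩ := hc₁m
    have hc₁C' : c₁s ∈ C₁ := Finset.mem_coe.mp hc₁C
    obtain ⟨c₂s, ⟨hc₂C, hc₂na⟩, huniq⟩ := hM c₁s hc₁C'
    have hc₁v : c₁s ≠ v := fun h => hv1 (h ▸ hc₁C')
    have hc₁2 : c₁s ∉ C₂ := hd12 _ hc₁C'
    set c₁sub : {w : V // w ≠ v ∧ w ∉ C₂} := ⟨c₁s, hc₁v, hc₁2⟩ with hc₁subdef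
    have hc₁sub : c₁sub ∉ X' := fun h => hc₁X' ⟨c₁sub, h, rfl⟩
    have hC1sub : ∀ x ∈ C₁, x ≠ c₁s → x ∈ Subtype.val '' X' := by
      intro x hx hne
      by_contra hxX
      have hx' : x ∈ (↑C₁ : Set V) \ (Subtype.val '' X') := ⟨Finset.mem_coe.mpr hx, hxX⟩
      rw [hc1] at hx'
      exact hne hx'
    set X : Set V := insert v (Subtype.val '' X' ∪ ((↑C₂ : Set V) \ {c₂s})) with hXdef
    have hmemX : ∀ x : V, x ∈ X ↔ x = v ∨ x ∈ Subtype.val '' X' ∨ (x ∈ C₂ ∧ x ≠ c₂s) := by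
      intro x
      simp only [hXdef, Set.mem_insert_iff, Set.mem_union, Set.mem_diff,
        Set.mem_singleton_iff, Finset.mem_coe]
    have himgC₂ : ∀ x ∈ Subtype.val '' X', x ∉ C₂ := by
      rintro x ⟨⟨y, hy1, hy2⟩, hmem, rfl⟩
      exact hy2
    have himgv : ∀ x ∈ Subtype.val '' X', x ≠ v := by
      rintro x ⟨⟨y, hy1, hy2⟩, hmem, rfl⟩
      exact hy1
    -- the key coverage step
    have key : ∀ u w : V, G.Adj u w → u ∉ X → w ∈ X := by
      intro u w hadj hu
      rw [hmemX] at hu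
      push_neg at hu
      obtain ⟨huv, huimg, huC₂⟩ := hu
      by_cases hwv : w = v
      · exact (hmemX w).mpr (Or.inl hwv)
      by_cases hwC₂ : w ∈ C₂
      · by_cases hwc₂s : w = c₂s
        · -- w = c₂s ∉ X : derive contradiction by showing u ∈ X
          exfalso
          rw [hwc₂s] at hadj
          by_cases huC₂' : u ∈ C₂
          · have hue := huC₂ huC₂'
            rw [hue] at hadj
            exact G.irrefl hadj
          by_cases huC₁ : u ∈ C₁
          · by_cases huc₁ : u = c₁s
            · exact hc₂na (huc₁ ▸ hadj)
            · exact huimg (hC1sub u huC₁ huc₁)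
          · -- u outside everything: added edge c₁s -- u in G'
            have husub : ({ val := u, property := ⟨huv, huC₂'⟩ } : {w : V // w ≠ v ∧ w ∉ C₂})
                ∉ X' := fun h => huimg ⟨_, h, rfl⟩
            have hadj' : (ReduceCliques G v C₁ C₂).Adj c₁sub ⟨u, huv, huC₂'⟩ := by
              rw [ReduceCliques, SimpleGraph.fromRel_adj]
              refine ⟨fun h => huC₁ ?_, Or.inl (Or.inr ⟨hc₁C', c₂s, hc₂C, hc₂na, hadj.symm⟩)⟩
              · have : c₁s = u := congrArg Subtype.val h
                exact this ▸ hc₁C'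
            rcases hVC hadj' with h | h
            · exact hc₁sub h
            · exact husub h
        · exact (hmemX w).mpr (Or.inr (Or.inr ⟨hwC₂, hwc₂s⟩))
      · -- w ∉ C₂, w ≠ v
        by_cases huc₂ : u = c₂s
        · rw [huc₂] at hadj
          by_cases hwC₁ : w ∈ C₁
          · by_cases hwc₁ : w = c₁s
            · rw [hwc₁] at hadj
              exact absurd hadj.symm hc₂na
            · exact (hmemX w).mpr (Or.inr (Or.inl (hC1sub w hwC₁ hwc₁)))
          · have hadj' : (ReduceCliques G v C₁ C₂).Adj c₁sub ⟨w, hwv, hwC₂⟩ := by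
              rw [ReduceCliques, SimpleGraph.fromRel_adj]
              refine ⟨fun h => hwC₁ ?_, Or.inl (Or.inr ⟨hc₁C', c₂s, hc₂C, hc₂na, hadj⟩)⟩
              · have : c₁s = w := congrArg Subtype.val h
                exact this ▸ hc₁C'
            rcases hVC hadj' with h | h
            · exact absurd h hc₁sub
            · exact (hmemX w).mpr (Or.inr (Or.inl ⟨_, h, rfl⟩))
        · have huC₂' : u ∉ C₂ := fun h => huc₂ (huC₂ h)
          have hadj' : (ReduceCliques G v C₁ C₂).Adj ⟨u, huv, huC₂'⟩ ⟨w, hwv, hwC₂⟩ := by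
            rw [ReduceCliques, SimpleGraph.fromRel_adj]
            refine ⟨fun h => G.ne_of_adj hadj (congrArg Subtype.val h), Or.inl (Or.inl hadj)⟩
          rcases hVC hadj' with h | h
          · exact absurd (⟨_, h, rfl⟩ : u ∈ Subtype.val '' X') huimg
          · exact (hmemX w).mpr (Or.inr (Or.inl ⟨_, h, rfl⟩))
    refine ⟨X, ?_, ?_, ?_, ?_⟩
    · intro u w hadj
      by_cases hu : u ∈ X
      · exact Or.inl hu
      · exact Or.inr (key u w hadj hu)
    · -- ncard X = k
      have hdisj1 : Disjoint (Subtype.val '' X') ((↑C₂ : Set V) \ {c₂s}) := by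
        rw [Set.disjoint_left]
        rintro x hx ⟨hxC, -⟩
        exact himgC₂ x hx (Finset.mem_coe.mp hxC)
      have hvnot : v ∉ Subtype.val '' X' ∪ ((↑C₂ : Set V) \ {c₂s}) := by
        rintro (h | ⟨h, -⟩)
        · exact himgv v h rfl
        · exact hv2 (Finset.mem_coe.mp h)
      rw [hXdef, Set.ncard_insert_of_notMem hvnot,
        Set.ncard_union_eq hdisj1 (Set.toFinite _) (Set.toFinite _),
        Set.ncard_image_of_injective _ Subtype.val_injective, hX',
        Set.ncard_diff (Set.singleton_subset_iff.mpr (Finset.mem_coe.mpr hc₂C)),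
        Set.ncard_singleton, Set.ncard_coe_finset]
      omega
    · -- C₁ \ X
      have : (↑C₁ : Set V) \ X = (↑C₁ : Set V) \ (Subtype.val '' X') := by
        ext x
        simp only [Set.mem_diff]
        constructor
        · rintro ⟨hx, hxX⟩
          exact ⟨hx, fun h => hxX ((hmemX x).mpr (Or.inr (Or.inl h)))⟩
        · rintro ⟨hx, hxX⟩
          refine ⟨hx, fun h => ?_⟩
          rcases (hmemX x).mp h with rfl | h' | ⟨h', -⟩
          · exact hv1 (Finset.mem_coe.mp hx)
          · exact hxX h'
          · exact hd12 x (Finset.mem_coe.mp hx) h'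
      rw [this, h1]
    · -- C₂ \ X = {c₂s}
      have : (↑C₂ : Set V) \ X = {c₂s} := by
        ext x
        simp only [Set.mem_diff, Set.mem_singleton_iff]
        constructor
        · rintro ⟨hx, hxX⟩
          by_contra hne
          exact hxX ((hmemX x).mpr (Or.inr (Or.inr ⟨Finset.mem_coe.mp hx, hne⟩)))
        · rintro rfl
          refine ⟨Finset.mem_coe.mpr hc₂C, fun h => ?_⟩
          rcases (hmemX x).mp h with rfl | h' | ⟨-, h'⟩
          · exact hv2 hc₂C
          · exact himgC₂ x h' hc₂C
          · exact h' rfl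
      rw [this, Set.ncard_singleton]
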